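/- If a partition π' Pareto dominates a partition π of a finite set of agents N (i.e., every agent's utility in π' is at least its utility in π, with strict inequality for some agent), then the sequence of agents' utilities in π' sorted in non-increasing order is lexicographically greater than the corresponding sorted sequence for π. -/

import Mathlib

/-- A partition of the agents of type `α`, given as the map sending each agent to her
coalition: every agent belongs to her own coalition, and the coalitions are consistent. -/
def IsPartitionFn {α : Type*} [DecidableEq α] (C : α → Finset α) : Prop :=
  (∀ i, i ∈ C i) ∧ ∀ i j, i ∈ C j → C i = C j

/-- The social welfare of a partition: the sum of the agents' utilities. -/
noncomputable def welfare {α : Type*} [Fintype α] (U : Finset α → ℝ) (C : α → Finset α) : ℝ :=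
  ∑ i, U (C i)

/-- `C'` Pareto dominates `C`. -/
def ParetoDominates {α : Type*} (U : Finset α → ℝ) (C C' : α → Finset α) : Prop :=
  (∀ i, U (C i) ≤ U (C' i)) ∧ ∃ i, U (C i) < U (C' i)

/-- No partition Pareto dominates `C`. -/
def ParetoOptimal {α : Type*} [DecidableEq α] (U : Finset α → ℝ) (C : α → Finset α) : Prop :=
  ¬ ∃ C', IsPartitionFn C' ∧ ParetoDominates U C C'

/-- No nonempty coalition blocks `C`. -/
def CoreStable {α : Type*} (U : Finset α → ℝ) (C : α → Finset α) : Prop :=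
  ¬ ∃ S : Finset α, S.Nonempty ∧ ∀ i ∈ S, U (C i) < U S

/-- No agent can beneficially move to an existing (possibly empty) coalition without
making the members of that coalition worse off. -/
def IndividuallyStable {α : Type*} [DecidableEq α] (U : Finset α → ℝ) (C : α → Finset α) : Prop :=
  ¬ ∃ i T, i ∉ T ∧ (T = ∅ ∨ ((∃ j, C j = T) ∧ U T ≤ U (insert i T))) ∧
    U (C i) < U (insert i T)

/-- No agent can beneficially move to an existing (possibly empty) coalition. -/
def NashStable {α : Type*} [DecidableEq α] (U : Finset α → ℝ) (C : α → Finset α) : Prop :=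
  ¬ ∃ i T, i ∉ T ∧ (T = ∅ ∨ ∃ j, C j = T) ∧ U (C i) < U (insert i T)

/-- The sequence of the agents' utilities in partition `C`, sorted in non-increasing order. -/
noncomputable def psi {α : Type*} [Fintype α] (U : Finset α → ℝ) (C : α → Finset α) : List ℝ :=
  (Finset.univ.val.map fun i => U (C i)).sort (· ≥ ·)

lemma sort_ge_cons (t : Multiset ℝ) (a : ℝ) (l : List ℝ)
    (h : t.sort (· ≥ ·) = a :: l) :
    a ∈ t ∧ (∀ x ∈ t, x ≤ a) ∧ l = (t.erase a).sort (· ≥ ·) := by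
  have ht : ((a :: l : List ℝ) : Multiset ℝ) = t := by rw [← h, Multiset.sort_eq]
  have hsorted : (a :: l).Pairwise (· ≥ ·) := by rw [← h]; exact Multiset.pairwise_sort _ _
  have ht' : t = a ::ₘ (l : Multiset ℝ) := by rw [← ht, Multiset.cons_coe]
  have hmem : a ∈ t := by rw [ht']; exact Multiset.mem_cons_self _ _
  refine ⟨hmem, ?_, ?_⟩
  · intro x hx
    rw [ht', Multiset.mem_cons] at hx
    rcases hx with rfl | hx
    · exact le_refl x
    · exact (List.pairwise_cons.mp hsorted).1 x (by simpa using hx)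
  · have herase : (t.erase a) = (l : Multiset ℝ) := by
      rw [ht', Multiset.erase_cons_head]
    have : ((t.erase a).sort (· ≥ ·) : Multiset ℝ) = (l : Multiset ℝ) := by
      rw [Multiset.sort_eq, herase]
    rw [Multiset.coe_eq_coe] at this
    exact (List.Perm.eq_of_pairwise' (Multiset.pairwise_sort _ _) (List.pairwise_cons.mp hsorted).2 this).symm

lemma key {ι : Type*} [DecidableEq ι] (f g : ι → ℝ) :
    ∀ (n : ℕ) (s : Multiset ι), s.card = n → (∀ i ∈ s, f i ≤ g i) → (∃ i ∈ s, f i < g i) →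
    List.Lex (· < ·) ((s.map f).sort (· ≥ ·)) ((s.map g).sort (· ≥ ·)) := by
  intro n
  induction n with
  | zero =>
    intro s hcard _ hlt
    obtain ⟨i, hi, _⟩ := hlt
    simp [Multiset.card_eq_zero] at hcard
    simp [hcard] at hi
  | succ n ih =>
    intro s hcard hle hlt
    obtain ⟨i₁, hi₁, hlt₁⟩ := hlt
    -- destructure the sorted lists
    obtain ⟨a, lA, hA⟩ : ∃ a lA, (s.map f).sort (· ≥ ·) = a :: lA := by
      rcases hsA : (s.map f).sort (· ≥ ·) with _ | ⟨a, lA⟩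
      · exfalso
        have : (s.map f) = 0 := by
          have := Multiset.sort_eq (s.map f) (· ≥ ·)
          rw [hsA] at this; simpa using this.symm
        simp [Multiset.map_eq_zero] at this
        simp [this] at hi₁
      · exact ⟨a, lA, rfl⟩
    obtain ⟨b, lB, hB⟩ : ∃ b lB, (s.map g).sort (· ≥ ·) = b :: lB := by
      rcases hsB : (s.map g).sort (· ≥ ·) with _ | ⟨b, lB⟩
      · exfalso
        have : (s.map g) = 0 := by
          have := Multiset.sort_eq (s.map g) (· ≥ ·)
          rw [hsB] at this; simpa using this.symm
        simp [Multiset.map_eq_zero] at this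
        simp [this] at hi₁
      · exact ⟨b, lB, rfl⟩
    obtain ⟨haMem, haMax, hlA⟩ := sort_ge_cons _ _ _ hA
    obtain ⟨hbMem, hbMax, hlB⟩ := sort_ge_cons _ _ _ hB
    obtain ⟨i₀, hi₀, hfi₀⟩ := Multiset.mem_map.mp haMem
    have hab : a ≤ b := by
      calc a = f i₀ := hfi₀.symm
      _ ≤ g i₀ := hle i₀ hi₀
      _ ≤ b := hbMax _ (Multiset.mem_map_of_mem g hi₀)
    rw [hA, hB]
    rcases lt_or_eq_of_le hab with h | rfl
    · exact List.Lex.rel h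
    -- a = b case
    have hgi₀ : g i₀ = a := le_antisymm (hbMax _ (Multiset.mem_map_of_mem g hi₀))
      (le_trans (le_of_eq hfi₀.symm) (hle i₀ hi₀))
    have hne : i₁ ≠ i₀ := by
      intro h; rw [h, hfi₀, hgi₀] at hlt₁; exact lt_irrefl _ hlt₁
    have hscons : s = i₀ ::ₘ s.erase i₀ := (Multiset.cons_erase hi₀).symm
    have hmapf : (s.map f).erase a = (s.erase i₀).map f := by
      conv_lhs => rw [hscons]
      rw [Multiset.map_cons, hfi₀, Multiset.erase_cons_head]
    have hmapg : (s.map g).erase a = (s.erase i₀).map g := by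
      conv_lhs => rw [hscons]
      rw [Multiset.map_cons, hgi₀, Multiset.erase_cons_head]
    have hi₁' : i₁ ∈ s.erase i₀ := Multiset.mem_erase_of_ne hne |>.mpr hi₁
    have hrec := ih (s.erase i₀) (by
        have := Multiset.card_erase_of_mem hi₀
        rw [this, hcard]; rfl)
      (fun i hi => hle i (Multiset.mem_of_mem_erase hi)) ⟨i₁, hi₁', hlt₁⟩
    rw [hlA, hlB, hmapf, hmapg]
    exact List.Lex.cons hrec

/-- If `C'` Pareto dominates `C`, then the non-increasingly sorted utility sequence of `C'`
is lexicographically greater than that of `C`. -/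
theorem stmt0 {α : Type*} [Fintype α] [DecidableEq α]
    (U : Finset α → ℝ) (hU : ∀ S : Finset α, 0 ≤ U S)
    (C C' : α → Finset α) (hC : IsPartitionFn C) (hC' : IsPartitionFn C')
    (hdom : ParetoDominates U C C') :
    List.Lex (· < ·) (psi U C) (psi U C') := by
  obtain ⟨hle, i, hi⟩ := hdom
  exact key (fun i => U (C i)) (fun i => U (C' i)) _ Finset.univ.val rfl
    (fun i _ => hle i) ⟨i, Finset.mem_univ i, hi⟩
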